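/- For any detector a : A → (1+A)^N and state x ∈ A, the set Constr(a, x) = {s ∈ N^ℕ | the anamorphism of Join([s], a) sends (s, x) to ∞} is a safety constraint: any stream all of whose finite prefixes are prefixes of elements of Constr(a, x) itself belongs to Constr(a, x). -/

import Mathlib

open scoped Classical

/-- The carrier of the output-system `[s]`: the set of tail shifts of the stream `s`. -/
def Tails {N : Type*} (s : ℕ → N) : Type _ :=
  {t : ℕ → N // ∃ k : ℕ, t = fun i => s (k + i)}

/-- Output of `[s]`: `t ↦ t 0`. -/
def tailsOut {N : Type*} {s : ℕ → N} (t : Tails s) : N := t.1 0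

/-- Transition of `[s]`: `t ↦ t[1..)`. -/
def tailsTr {N : Type*} {s : ℕ → N} (t : Tails s) : Tails s :=
  ⟨fun i => t.1 (i + 1), by
    obtain ⟨k, hk⟩ := t.2
    exact ⟨k + 1, by funext i; simp only [hk]; congr 1; omega⟩⟩

/-- The `Join` of a system with output and a detector. -/
def joinMap {A B N : Type*} (out : A → N) (tr : A → A) (a : B → N → Option B) :
    A × B → Option (A × B) :=
  fun p => (a p.2 (out p.1)).map fun y => (tr p.1, y)

/-- The `m`-fold Kleisli iterate of a partial self-map, propagating `⇓`. -/
def kiter {X : Type*} (g : X → Option X) : ℕ → X → Option X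
  | 0, x => some x
  | k + 1, x => (kiter g k x).bind g

/-- The anamorphism of a `T`-coalgebra into the final `T`-coalgebra `ℕ ∪ {∞}`:
`∞` iff all Kleisli iterates are defined. -/
noncomputable def anaT {X : Type*} (g : X → Option X) : X → ℕ∞ := fun x =>
  if h : ∃ k : ℕ, kiter g (k + 1) x = none then (Nat.find h : ℕ∞) else ⊤

/-- `Constr(a, x)`: the streams `s` whose run in `Join([s], a)` from `(s, x)` never
terminates, i.e. the anamorphism sends `(s, x)` to `∞`. -/
noncomputable def constr {A N : Type*} (a : A → N → Option A) (x : A) :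
    Set (ℕ → N) :=
  {s | anaT (joinMap (tailsOut (s := s)) tailsTr a)
      (⟨s, ⟨0, by funext i; simp⟩⟩, x) = ⊤}

/-- A safety constraint: `S` contains any stream all of whose finite prefixes are
prefixes of elements of `S`. -/
def IsSafety {N : Type*} (S : Set (ℕ → N)) : Prop :=
  ∀ s : ℕ → N, (∀ m : ℕ, ∃ s' ∈ S, ∀ k < m, s' k = s k) → s ∈ S

section Aux

variable {A N : Type*}

/-- Pure run of the detector along the first `m` letters of a stream. -/
def runD (a : A → N → Option A) : ℕ → (ℕ → N) → A → Option A
  | 0, _, x => some x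
  | m + 1, u, x => (runD a m u x).bind fun y => a y (u m)

theorem runD_congr (a : A → N → Option A) (m : ℕ) (u v : ℕ → N) (x : A)
    (h : ∀ k < m, u k = v k) : runD a m u x = runD a m v x := by
  induction m with
  | zero => rfl
  | succ m ih =>
    simp only [runD, ih (fun k hk => h k (Nat.lt_succ_of_lt hk)),
      h m (Nat.lt_succ_self m)]

theorem tailsTr_iterate {s : ℕ → N} (m : ℕ) (t : Tails s) (i : ℕ) :
    (tailsTr^[m] t).1 i = t.1 (m + i) := by
  induction m generalizing i with
  | zero => simp
  | succ m ih =>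
    rw [Function.iterate_succ_apply']
    have h1 : (tailsTr (tailsTr^[m] t)).1 i = (tailsTr^[m] t).1 (i + 1) := rfl
    rw [h1, ih]
    exact congrArg t.1 (by omega)

theorem kiter_eq_runD {s : ℕ → N} (a : A → N → Option A) (m : ℕ)
    (t : Tails s) (x : A) :
    kiter (joinMap (tailsOut (s := s)) tailsTr a) m (t, x) =
      (runD a m t.1 x).map fun y => (tailsTr^[m] t, y) := by
  induction m with
  | zero => rfl
  | succ m ih =>
    rw [kiter, ih, runD]
    cases h : runD a m t.1 x with
    | none => simp
    | some y =>
      simp only [Option.map_some, Option.bind_some]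
      show (a y (tailsOut (tailsTr^[m] t))).map _ = _
      have ho : tailsOut (tailsTr^[m] t) = t.1 m := by
        simp [tailsOut, tailsTr_iterate]
      rw [ho, Function.iterate_succ_apply']

theorem mem_constr_iff (a : A → N → Option A) (x : A) (s : ℕ → N) :
    s ∈ constr a x ↔ ∀ k : ℕ, runD a (k + 1) s x ≠ none := by
  have hk : ∀ k : ℕ, kiter (joinMap (tailsOut (s := s)) tailsTr a) (k + 1)
      ((⟨s, ⟨0, by funext i; simp⟩⟩ : Tails s), x) = none ↔ runD a (k + 1) s x = none := by
    intro k
    have e := kiter_eq_runD (s := s) a (k + 1) ⟨s, ⟨0, by funext i; simp⟩⟩ x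
    erw [e]
    cases runD a (k + 1) s x <;> simp
  constructor
  · intro h k hc
    simp only [constr, Set.mem_setOf_eq, anaT] at h
    split at h
    · exact (by simp at h)
    · next hne => exact hne ⟨k, (hk k).mpr hc⟩
  · intro h
    simp only [constr, Set.mem_setOf_eq, anaT]
    rw [dif_neg]
    rintro ⟨k, hc⟩
    exact h k ((hk k).mp hc)

end Aux

/-- For any detector `a` and state `x`, the set `Constr(a, x)` is a safety
constraint. -/
theorem constr_isSafety (N A : Type) [Fintype N] (a : A → N → Option A) (x : A) :
    IsSafety (constr a x) := by
  intro s hs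
  rw [mem_constr_iff]
  intro k hc
  obtain ⟨s', hs', hagree⟩ := hs (k + 1)
  rw [mem_constr_iff] at hs'
  apply hs' k
  rw [← hc]
  exact runD_congr a (k + 1) s' s x hagree
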